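/- Let M be a zonoid in ℝ² with diameter d, and for k ≥ 1 let M_{2k} be its 2k-th canonical approximation. Then, with ε = π(1+√2)·d/(4k), one has sup_{θ∈ℝ} | Ex(θ,M) − Ex(θ,M_{2k}) | ≤ 16·d·ε + 4π·ε². In particular there is a constant C depending only on d such that sup_θ |Ex(θ,M) − Ex(θ,M_{2k})| ≤ C/k. -/

import Mathlib

open MeasureTheory Real

noncomputable section

abbrev E2 := EuclideanSpace ℝ (Fin 2)

/-- The unit vector at angle `θ`. -/
def uvec (θ : ℝ) : E2 := (WithLp.equiv 2 (Fin 2 → ℝ)).symm ![Real.cos θ, Real.sin θ]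

/-- Rotation of the plane by angle `θ`. -/
def rot (θ : ℝ) (x : E2) : E2 :=
  (WithLp.equiv 2 (Fin 2 → ℝ)).symm
    ![Real.cos θ * x 0 - Real.sin θ * x 1, Real.sin θ * x 0 + Real.cos θ * x 1]

/-- The support function of a set `M ⊆ ℝ²`, as a function of the angle `θ`. -/
def supp (M : Set E2) (θ : ℝ) : ℝ := sSup ((fun x : E2 => (inner ℝ x (uvec θ) : ℝ)) '' M)

/-- The excluded area function: the area of the difference body `M - R_θ M`. -/
def Ex (θ : ℝ) (M : Set E2) : ℝ :=
  (volume {p : E2 | ∃ x ∈ M, ∃ y ∈ M, p = x - rot θ y}).toReal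

/-- The `k`-th canonical approximation of `M`. -/
def canonApprox (M : Set E2) (k : ℕ) : Set E2 :=
  ⋂ i ∈ Finset.Icc 1 (4 * k),
    {x : E2 | (inner ℝ x (uvec ((i : ℝ) * π / (2 * k))) : ℝ) ≤ supp M ((i : ℝ) * π / (2 * k))}

open Set

lemma uvec_zero (θ : ℝ) : uvec θ 0 = Real.cos θ := rfl
lemma uvec_one (θ : ℝ) : uvec θ 1 = Real.sin θ := rfl

lemma inner_E2 (x y : E2) : (inner ℝ x y : ℝ) = x 0 * y 0 + x 1 * y 1 := by
  simp [PiLp.inner_apply, Fin.sum_univ_two, mul_comm]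

lemma norm_E2 (x : E2) : ‖x‖ = Real.sqrt (x 0 ^ 2 + x 1 ^ 2) := by
  rw [EuclideanSpace.norm_eq]
  simp [Fin.sum_univ_two, sq_abs]

lemma norm_uvec (θ : ℝ) : ‖uvec θ‖ = 1 := by
  rw [norm_E2, uvec_zero, uvec_one]
  rw [show Real.cos θ ^ 2 + Real.sin θ ^ 2 = 1 from by
    rw [add_comm]; exact Real.sin_sq_add_cos_sq θ]
  exact Real.sqrt_one

lemma rot_zero' (θ : ℝ) (x : E2) : rot θ x 0 = Real.cos θ * x 0 - Real.sin θ * x 1 := rfl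
lemma rot_one' (θ : ℝ) (x : E2) : rot θ x 1 = Real.sin θ * x 0 + Real.cos θ * x 1 := rfl

lemma norm_rot (θ : ℝ) (x : E2) : ‖rot θ x‖ = ‖x‖ := by
  rw [norm_E2, norm_E2, rot_zero', rot_one']
  congr 1
  nlinarith [Real.sin_sq_add_cos_sq θ]

def rotL (θ : ℝ) : E2 →ₗ[ℝ] E2 where
  toFun := rot θ
  map_add' x y := by
    apply PiLp.ext
    intro i
    fin_cases i <;>
      simp [rot, WithLp.equiv_symm_apply, PiLp.toLp_apply] <;> ring
  map_smul' c x := by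
    apply PiLp.ext
    intro i
    fin_cases i <;>
      simp [rot, WithLp.equiv_symm_apply, PiLp.toLp_apply] <;> ring

lemma rot_sub (θ : ℝ) (x y : E2) : rot θ x - rot θ y = rot θ (x - y) := by
  rw [show rot θ = rotL θ from rfl]; rw [← map_sub]

lemma continuous_rot (θ : ℝ) : Continuous (rot θ) := by
  rw [show rot θ = rotL θ from rfl]
  exact (rotL θ).continuous_of_finiteDimensional

lemma abs_coord_le_norm (x : E2) (i : Fin 2) : |x i| ≤ ‖x‖ := by
  rw [norm_E2]
  rw [← Real.sqrt_sq_eq_abs]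
  apply Real.sqrt_le_sqrt
  fin_cases i
  · show x 0 ^ 2 ≤ _
    nlinarith [sq_nonneg (x 1)]
  · show x 1 ^ 2 ≤ _
    nlinarith [sq_nonneg (x 0)]

-- chord ≤ arc
lemma chord_le (α β : ℝ) : ‖uvec α - uvec β‖ ≤ |α - β| := by
  have h1 : ‖uvec α - uvec β‖ = Real.sqrt ((Real.cos α - Real.cos β)^2 + (Real.sin α - Real.sin β)^2) := by
    rw [norm_E2]; rfl
  rw [h1, ← Real.sqrt_sq_eq_abs]
  apply Real.sqrt_le_sqrt
  have hc : Real.cos α * Real.cos β + Real.sin α * Real.sin β = Real.cos (α - β) := (Real.cos_sub α β).symm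
  have h2 : 1 - Real.cos (α - β) ≤ (α - β)^2 / 2 := by
    have hdb : Real.cos (2 * ((α - β)/2)) = 2 * Real.cos ((α-β)/2) ^ 2 - 1 := Real.cos_two_mul _
    rw [show 2 * ((α - β)/2) = α - β by ring] at hdb
    have hs : |Real.sin ((α - β)/2)| ≤ |(α-β)/2| := Real.abs_sin_le_abs
    have hs2 : |Real.sin ((α - β)/2)| ^ 2 ≤ |(α-β)/2| ^ 2 := pow_le_pow_left₀ (abs_nonneg _) hs 2
    rw [sq_abs, sq_abs] at hs2
    nlinarith [Real.sin_sq_add_cos_sq ((α - β)/2)]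
  nlinarith [Real.sin_sq_add_cos_sq α, Real.sin_sq_add_cos_sq β]

lemma exists_uvec (u : E2) (hu : ‖u‖ = 1) : ∃ φ : ℝ, uvec φ = u := by
  set z : ℂ := ⟨u 0, u 1⟩ with hz
  have habs : ‖z‖ = 1 := by
    rw [Complex.norm_def, Complex.normSq_mk]
    rw [norm_E2] at hu
    rw [show u 0 * u 0 + u 1 * u 1 = u 0 ^2 + u 1 ^2 by ring]
    exact hu
  have hz0 : z ≠ 0 := by
    intro h
    rw [h] at habs; simp at habs
  refine ⟨Complex.arg z, ?_⟩
  apply PiLp.ext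
  intro i
  have hcos := Complex.cos_arg hz0
  have hsin := Complex.sin_arg z
  rw [habs] at hcos hsin
  simp at hcos hsin
  fin_cases i
  · show uvec z.arg 0 = u 0
    rw [uvec_zero]; exact hcos
  · show uvec z.arg 1 = u 1
    rw [uvec_one]; exact hsin

lemma uvec_periodic (x : ℝ) (n : ℤ) : uvec (x + n * (2 * π)) = uvec x := by
  unfold uvec
  rw [Real.cos_add_int_mul_two_pi, Real.sin_add_int_mul_two_pi]


lemma rotL_eq (θ : ℝ) : rot θ = rotL θ := rfl

section approx

variable {M : Set E2}

lemma bdd_inner (hcpt : IsCompact M) (θ : ℝ) :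
    BddAbove ((fun x : E2 => (inner ℝ x (uvec θ) : ℝ)) '' M) :=
  (hcpt.image (Continuous.inner continuous_id continuous_const)).bddAbove

lemma le_supp (hcpt : IsCompact M) {y : E2} (hy : y ∈ M) (θ : ℝ) :
    (inner ℝ y (uvec θ) : ℝ) ≤ supp M θ :=
  le_csSup (bdd_inner hcpt θ) (Set.mem_image_of_mem _ hy)

lemma subset_canonApprox (hcpt : IsCompact M) (k : ℕ) : M ⊆ canonApprox M k := by
  intro x hx
  rw [canonApprox, Set.mem_iInter₂]
  intro i _
  exact le_supp hcpt hx _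

lemma norm_le_half_diam (hcpt : IsCompact M) (hsymm : M = -M) {y : E2} (hy : y ∈ M) :
    ‖y‖ ≤ Metric.diam M / 2 := by
  have hy' : -y ∈ M := by
    rw [hsymm]; exact Set.neg_mem_neg.mpr hy
  have := Metric.dist_le_diam_of_mem hcpt.isBounded hy hy'
  rw [dist_eq_norm, sub_neg_eq_add] at this
  have h2 : ‖y + y‖ = 2 * ‖y‖ := by
    rw [show y + y = (2:ℝ) • y by module, norm_smul]
    simp
  linarith

set_option maxHeartbeats 1000000 in
lemma canon_near (hne : M.Nonempty) (hcpt : IsCompact M) (hconv : Convex ℝ M)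
    (hsymm : M = -M) {k : ℕ} (hk : 1 ≤ k) {x : E2} (hx : x ∈ canonApprox M (2 * k)) :
    ∃ m ∈ M, dist x m ≤ π * (1 + Real.sqrt 2) * Metric.diam M / (4 * k) := by
  set d := Metric.diam M with hd
  have hd0 : 0 ≤ d := Metric.diam_nonneg
  set δ : ℝ := π / (4 * k) with hδ
  have hk1 : (1:ℝ) ≤ (k:ℝ) := by exact_mod_cast hk
  have hδ0 : 0 < δ := by
    apply div_pos Real.pi_pos; linarith
  have hδ1 : δ < 1 := by
    rw [hδ, div_lt_one (by linarith)]
    calc π < 3.15 := Real.pi_lt_d2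
    _ ≤ 4 * k := by linarith
  have hgoal : π * (1 + Real.sqrt 2) * d / (4 * k) = (1 + Real.sqrt 2) * d * δ := by
    rw [hδ]; ring
  rw [hgoal]
  obtain ⟨m, hm, hdist⟩ := hcpt.exists_infDist_eq_dist hne x
  set t := dist x m with ht
  have ht0 : 0 ≤ t := dist_nonneg
  have hsqrt2 : (1:ℝ) ≤ Real.sqrt 2 := by
    rw [show (1:ℝ) = Real.sqrt 1 by simp]
    exact Real.sqrt_le_sqrt (by norm_num)
  rcases eq_or_lt_of_le ht0 with h0 | htpos
  · refine ⟨m, hm, ?_⟩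
    rw [← ht, ← h0]; positivity
  refine ⟨m, hm, ?_⟩
  -- the unit vector from m to x
  set u : E2 := t⁻¹ • (x - m) with hu
  have hxm : ‖x - m‖ = t := by rw [ht, dist_eq_norm]
  have hun : ‖u‖ = 1 := by
    rw [hu, norm_smul, hxm, norm_inv, Real.norm_eq_abs, abs_of_pos htpos,
      inv_mul_cancel₀ (ne_of_gt htpos)]
  -- obtuse angle property
  have hobt : ∀ w ∈ M, (inner ℝ (x - m) (w - m) : ℝ) ≤ 0 := by
    have hinf : ‖x - m‖ = ⨅ w : M, ‖x - w‖ := by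
      rw [hxm, ← hdist, Metric.infDist_eq_iInf]
      simp only [dist_eq_norm]
    exact (norm_eq_iInf_iff_real_inner_le_zero hconv hm).mp hinf
  have hinner_le : ∀ w ∈ M, (inner ℝ w u : ℝ) ≤ (inner ℝ m u : ℝ) := by
    intro w hw
    have h1 := hobt w hw
    have h2 : (inner ℝ (x - m) (w - m) : ℝ) = t * ((inner ℝ w u : ℝ) - (inner ℝ m u : ℝ)) := by
      have : x - m = t • u := by
        rw [hu, smul_smul, mul_inv_cancel₀ (ne_of_gt htpos), one_smul]
      rw [this, real_inner_smul_left, inner_sub_right, real_inner_comm u w, real_inner_comm u m]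
    nlinarith
  -- find angle
  obtain ⟨φ, hφ⟩ := exists_uvec u hun
  set n : ℤ := round (φ / δ) with hn
  have hround : |(n:ℝ) - φ / δ| ≤ 1 / 2 := by
    rw [abs_sub_comm]; exact abs_sub_round _
  have hnδ : |(n:ℝ) * δ - φ| ≤ δ / 2 := by
    have heq : (n:ℝ) * δ - φ = ((n:ℝ) - φ/δ) * δ := by field_simp
    rw [heq, abs_mul, abs_of_pos hδ0]
    calc |(n:ℝ) - φ/δ| * δ ≤ (1/2) * δ := by
          apply mul_le_mul_of_nonneg_right hround (le_of_lt hδ0)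
    _ = δ / 2 := by ring
  -- the grid index
  set q : ℤ := (n - 1) / (8 * k) with hq
  set i : ℕ := ((n - 1) % (8 * k)).toNat + 1 with hi
  have h8k : (0:ℤ) < 8 * k := by positivity
  have hmod_nonneg : 0 ≤ (n - 1) % (8 * k) := Int.emod_nonneg _ (ne_of_gt h8k)
  have hmod_lt : (n - 1) % (8 * k) < 8 * k := Int.emod_lt_of_pos _ h8k
  have hi_ge : 1 ≤ i := by omega
  have hi_le : i ≤ 4 * (2 * k) := by
    have : ((n - 1) % (8 * k)).toNat < 8 * k := by omega
    omega
  have hiq : (i : ℤ) = n - 8 * k * q := by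
    have h := Int.mul_ediv_add_emod (n - 1) (8 * (k:ℤ))
    rw [hi]
    push_cast [Int.toNat_of_nonneg hmod_nonneg]
    rw [hq]
    linarith
  -- the angle equality
  have hiR : (i : ℝ) = (n : ℝ) - 8 * (k:ℝ) * (q:ℝ) := by exact_mod_cast hiq
  have hangle : ((i : ℝ) * π / (2 * ((2 * k : ℕ) : ℝ))) = (n : ℝ) * δ + ((-q : ℤ) : ℝ) * (2 * π) := by
    rw [show ((2 * k : ℕ) : ℝ) = 2 * (k:ℝ) by push_cast; ring, hiR, hδ]
    push_cast
    field_simp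
    ring
  have huvec_eq : uvec ((i : ℝ) * π / (2 * ((2 * k : ℕ) : ℝ))) = uvec ((n:ℝ) * δ) := by
    rw [hangle, uvec_periodic]
  -- extract the constraint
  have hconstr : (inner ℝ x (uvec ((i : ℝ) * π / (2 * ((2 * k):ℕ)))) : ℝ) ≤
      supp M ((i : ℝ) * π / (2 * ((2 * k):ℕ))) := by
    rw [canonApprox, Set.mem_iInter₂] at hx
    exact hx i (Finset.mem_Icc.mpr ⟨hi_ge, hi_le⟩)
  set u' : E2 := uvec ((i : ℝ) * π / (2 * ((2 * k):ℕ))) with hu'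
  have hchord : ‖u' - u‖ ≤ δ / 2 := by
    rw [huvec_eq, ← hφ]
    exact (chord_le _ _).trans hnδ
  -- norm bounds
  have hmn : ‖m‖ ≤ d / 2 := norm_le_half_diam hcpt hsymm hm
  have hxn : ‖x‖ ≤ d / 2 + t := by
    calc ‖x‖ = ‖m + (x - m)‖ := by rw [add_sub_cancel]
    _ ≤ ‖m‖ + ‖x - m‖ := norm_add_le _ _
    _ ≤ d / 2 + t := by rw [hxm]; linarith
  -- support bound
  have hsupp_le : supp M ((i : ℝ) * π / (2 * ((2 * k):ℕ))) ≤ (inner ℝ m u : ℝ) + (d/2) * (δ/2) := by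
    apply csSup_le (hne.image _)
    rintro v ⟨y, hy, rfl⟩
    show (inner ℝ y u' : ℝ) ≤ _
    have h1 : (inner ℝ y u' : ℝ) = (inner ℝ y u : ℝ) + (inner ℝ y (u' - u) : ℝ) := by
      rw [← inner_add_right]; congr 1; abel
    have h2 : (inner ℝ y (u' - u) : ℝ) ≤ ‖y‖ * ‖u' - u‖ := real_inner_le_norm _ _
    have h3 : ‖y‖ * ‖u' - u‖ ≤ (d/2) * (δ/2) := by
      apply mul_le_mul (norm_le_half_diam hcpt hsymm hy) hchord (norm_nonneg _) (by linarith)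
    have h4 := hinner_le y hy
    rw [h1]
    linarith
  -- lower bound on inner ℝ x u'
  have hlow : (inner ℝ m u : ℝ) + t - ‖x‖ * (δ/2) ≤ (inner ℝ x u' : ℝ) := by
    have h1 : (inner ℝ x u' : ℝ) = (inner ℝ x u : ℝ) + (inner ℝ x (u' - u) : ℝ) := by
      rw [← inner_add_right]; congr 1; abel
    have h2 : |(inner ℝ x (u' - u) : ℝ)| ≤ ‖x‖ * ‖u' - u‖ := abs_real_inner_le_norm _ _
    have h3 : ‖x‖ * ‖u' - u‖ ≤ ‖x‖ * (δ/2) := by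
      apply mul_le_mul_of_nonneg_left hchord (norm_nonneg _)
    have h4 : (inner ℝ x u : ℝ) = (inner ℝ m u : ℝ) + t := by
      have hxmu : (inner ℝ (x - m) u : ℝ) = t := by
        rw [hu, real_inner_smul_right, real_inner_self_eq_norm_sq, hxm]
        field_simp
      rw [← hxmu, inner_sub_left]; ring
    have := abs_le.mp h2
    rw [h1, h4]
    linarith
  -- combine
  have hkey : t ≤ ‖x‖ * (δ/2) + (d/2) * (δ/2) := by linarith [hconstr, hsupp_le, hlow]
  have h5 : ‖x‖ * (δ/2) ≤ (d/2 + t) * (δ/2) :=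
    mul_le_mul_of_nonneg_right hxn (by positivity)
  have hfinal : t * (2 - δ) ≤ d * δ := by linarith [hkey, h5]
  have h2δ : 1 ≤ 2 - δ := by linarith
  show t ≤ _
  calc t = t * 1 := by ring
  _ ≤ t * (2 - δ) := mul_le_mul_of_nonneg_left h2δ ht0
  _ = t * (2 - δ) * 1 := by ring
  _ ≤ d * δ := by rw [mul_one]; exact hfinal
  _ ≤ (1 + Real.sqrt 2) * d * δ := by
      nlinarith [mul_nonneg (mul_nonneg hd0 hδ0.le) (Real.sqrt_nonneg 2)]

end approx


section volprep

lemma cvx_Icc (s : Set ℝ) (hconv : Convex ℝ s) (hcpt : IsCompact s) (hne : s.Nonempty) :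
    s = Icc (sInf s) (sSup s) := by
  apply Set.Subset.antisymm
  · intro x hx
    exact ⟨csInf_le hcpt.bddBelow hx, le_csSup hcpt.bddAbove hx⟩
  · exact hconv.ordConnected.out (hcpt.sInf_mem hne) (hcpt.sSup_mem hne)

/-- upper slice function -/
def gsl (D : Set (ℝ × ℝ)) (x : ℝ) : ℝ := sSup {y | (x, y) ∈ D}

/-- cap function -/
def capf (a b r : ℝ) (x : ℝ) : ℝ :=
  if x < a then Real.sqrt (r^2 - (a - x)^2) else if x ≤ b then r
    else Real.sqrt (r^2 - (x - b)^2)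

lemma capf_nonneg (a b r : ℝ) (hr : 0 ≤ r) (x : ℝ) : 0 ≤ capf a b r x := by
  unfold capf
  split_ifs <;> first | exact Real.sqrt_nonneg _ | exact hr

lemma capf_le (a b r : ℝ) (hr : 0 ≤ r) (x : ℝ) : capf a b r x ≤ r := by
  unfold capf
  have h : ∀ s : ℝ, Real.sqrt (r^2 - s^2) ≤ r := by
    intro s
    calc Real.sqrt (r^2 - s^2) ≤ Real.sqrt (r^2) := by
          apply Real.sqrt_le_sqrt; nlinarith [sq_nonneg s]
    _ = r := Real.sqrt_sq hr
  split_ifs <;> first | exact h _ | exact le_refl r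

lemma capf_measurable (a b r : ℝ) : Measurable (capf a b r) := by
  unfold capf
  apply Measurable.ite (measurableSet_lt measurable_id measurable_const)
  · exact (Real.continuous_sqrt.comp (by continuity)).measurable
  · apply Measurable.ite (measurableSet_le measurable_id measurable_const)
    · exact measurable_const
    · exact (Real.continuous_sqrt.comp (by continuity)).measurable

lemma capf_ge (a b r x w : ℝ) (hr : 0 ≤ r) (hw : w ∈ Icc a b)
    (h2 : (x - w)^2 ≤ r^2) : Real.sqrt (r^2 - (x - w)^2) ≤ capf a b r x := by
  unfold capf
  split_ifs with h1 hb
  · -- x < a ≤ w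
    apply Real.sqrt_le_sqrt
    nlinarith [hw.1]
  · have hs1 : Real.sqrt (r^2 - (x-w)^2) ≤ Real.sqrt (r^2) := by
      apply Real.sqrt_le_sqrt
      nlinarith [sq_nonneg (x - w)]
    have hs2 : Real.sqrt (r^2) = r := Real.sqrt_sq hr
    linarith
  · push_neg at h1 hb
    apply Real.sqrt_le_sqrt
    nlinarith [hw.2]

lemma sqrt_quarter_circle (r : ℝ) (hr : 0 ≤ r) :
    ∫ x in (0:ℝ)..r, Real.sqrt (r^2 - x^2) = π * r^2 / 4 := by
  rcases eq_or_lt_of_le hr with h0 | hrpos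
  · rw [← h0]; simp
  have hint1 : ∫ x in (0:ℝ)..(1:ℝ), Real.sqrt (1 - x^2) = π / 4 := by
    have heven := intervalIntegral.integral_comp_neg (a := (0:ℝ)) (b := 1)
      (fun x => Real.sqrt (1 - x^2))
    simp only [neg_sq, neg_zero] at heven
    have hcont : ∀ u v : ℝ, IntervalIntegrable (fun x : ℝ => Real.sqrt (1 - x^2)) volume u v := by
      intro u v
      apply Continuous.intervalIntegrable
      exact Real.continuous_sqrt.comp (by continuity)
    have hadd := intervalIntegral.integral_add_adjacent_intervals (hcont (-1) 0) (hcont 0 1)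
    have hval : (∫ x in (-1:ℝ)..1, Real.sqrt (1 - x^2)) = π / 2 := integral_sqrt_one_sub_sq
    linarith
  have hsub : (∫ x in (0:ℝ)..(1:ℝ), Real.sqrt (r^2 - (r*x)^2))
      = r⁻¹ • ∫ x in (r*0)..(r*1), Real.sqrt (r^2 - x^2) := by
    exact intervalIntegral.integral_comp_mul_left (fun x => Real.sqrt (r^2 - x^2)) (ne_of_gt hrpos)
  have hlhs : (∫ x in (0:ℝ)..(1:ℝ), Real.sqrt (r^2 - (r*x)^2)) = r * (π / 4) := by
    rw [show (fun x : ℝ => Real.sqrt (r^2 - (r*x)^2)) = fun x : ℝ => r * Real.sqrt (1 - x^2) from ?_]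
    · rw [intervalIntegral.integral_const_mul, hint1]
    · funext x
      rw [show r^2 - (r*x)^2 = r^2 * (1 - x^2) by ring, Real.sqrt_mul (sq_nonneg r),
        Real.sqrt_sq hr]
  rw [mul_zero, mul_one] at hsub
  rw [hlhs] at hsub
  have : (∫ x in (0:ℝ)..r, Real.sqrt (r^2 - x^2)) = r * (r * (π/4)) := by
    rw [hsub, smul_eq_mul]
    field_simp
  rw [this]; ring

lemma capf_integral (a b r : ℝ) (hab : a ≤ b) (hr : 0 ≤ r) :
    ∫ x in (a-r)..(b+r), capf a b r x = r * (b - a) + π * r^2 / 2 := by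
  have hcm : ∀ u v : ℝ, IntervalIntegrable (capf a b r) volume u v := by
    intro u v
    rw [intervalIntegrable_iff]
    apply Measure.integrableOn_of_bounded (measure_Ioc_lt_top).ne
      (capf_measurable a b r).aestronglyMeasurable
    filter_upwards with x
    rw [Real.norm_eq_abs, abs_le]
    exact ⟨by linarith [capf_nonneg a b r hr x], capf_le a b r hr x⟩
  have h1 : ∫ x in (a-r)..a, capf a b r x = π * r^2 / 4 := by
    have : EqOn (capf a b r) (fun x => Real.sqrt (r^2 - (a - x)^2)) (uIcc (a-r) a) := by
      intro x hx
      rw [uIcc_of_le (by linarith)] at hx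
      unfold capf
      rcases lt_or_ge x a with h | h
      · rw [if_pos h]
      · have hxa : x = a := le_antisymm hx.2 h
        rw [if_neg (by linarith), if_pos (by linarith)]
        rw [hxa]
        simp [Real.sqrt_sq hr]
    rw [intervalIntegral.integral_congr this,
      intervalIntegral.integral_comp_sub_left (fun t => Real.sqrt (r^2 - t^2)) a]
    rw [show a - a = 0 by ring, show a - (a - r) = r by ring]
    exact sqrt_quarter_circle r hr
  have h2 : ∫ x in a..b, capf a b r x = r * (b - a) := by
    have : EqOn (capf a b r) (fun _ => r) (uIcc a b) := by
      intro x hx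
      rw [uIcc_of_le hab] at hx
      unfold capf
      rw [if_neg (by linarith [hx.1]), if_pos hx.2]
    rw [intervalIntegral.integral_congr this, intervalIntegral.integral_const, smul_eq_mul]
    ring
  have h3 : ∫ x in b..(b+r), capf a b r x = π * r^2 / 4 := by
    have : EqOn (capf a b r) (fun x => Real.sqrt (r^2 - (x - b)^2)) (uIcc b (b+r)) := by
      intro x hx
      rw [uIcc_of_le (by linarith)] at hx
      unfold capf
      rcases lt_or_ge b x with h | h
      · rw [if_neg (by linarith [hx.1]), if_neg (by linarith)]
      · have hxb : x = b := le_antisymm h hx.1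
        rw [if_neg (by linarith), if_pos (by linarith)]
        rw [hxb]
        simp [Real.sqrt_sq hr]
    rw [intervalIntegral.integral_congr this,
      intervalIntegral.integral_comp_sub_right (fun t => Real.sqrt (r^2 - t^2)) b]
    rw [show b - b = 0 by ring, show b + r - b = r by ring]
    exact sqrt_quarter_circle r hr
  have hh1 := intervalIntegral.integral_add_adjacent_intervals (hcm (a-r) a) (hcm a b)
  have hh2 := intervalIntegral.integral_add_adjacent_intervals (hcm (a-r) b) (hcm b (b+r))
  rw [← hh2, ← hh1, h1, h2, h3]
  ring

end volprep


section UPB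

variable {D : Set (ℝ × ℝ)} {d r : ℝ}

lemma fst_linear : IsLinearMap ℝ (Prod.fst : ℝ × ℝ → ℝ) :=
  ⟨fun _ _ => rfl, fun _ _ => rfl⟩

lemma slice_bddAbove (hDb : ∀ p ∈ D, |p.1| ≤ d ∧ |p.2| ≤ d) (x : ℝ) :
    BddAbove {y | (x, y) ∈ D} :=
  ⟨d, fun y hy => (abs_le.mp (hDb _ hy).2).2⟩

lemma slice_mem_le (hDb : ∀ p ∈ D, |p.1| ≤ d ∧ |p.2| ≤ d) {x y : ℝ} (h : (x, y) ∈ D) :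
    y ≤ gsl D x :=
  le_csSup (slice_bddAbove hDb x) h

lemma gsl_mem (hcpt : IsCompact D) (hDb : ∀ p ∈ D, |p.1| ≤ d ∧ |p.2| ≤ d)
    {x : ℝ} (hx : x ∈ Prod.fst '' D) : (x, gsl D x) ∈ D := by
  have hne : {y | (x, y) ∈ D}.Nonempty := by
    obtain ⟨p, hp, hpx⟩ := hx
    refine ⟨p.2, ?_⟩
    show (x, p.2) ∈ D
    rw [show ((x, p.2) : ℝ × ℝ) = p from Prod.ext hpx.symm rfl]
    exact hp
  have hcl : IsClosed {y | (x, y) ∈ D} :=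
    hcpt.isClosed.preimage (Continuous.prodMk_right x)
  exact hcl.csSup_mem hne (slice_bddAbove hDb x)

lemma gsl_abs_le (hcpt : IsCompact D) (hDb : ∀ p ∈ D, |p.1| ≤ d ∧ |p.2| ≤ d) (hd : 0 ≤ d)
    (x : ℝ) : |gsl D x| ≤ d := by
  by_cases hx : x ∈ Prod.fst '' D
  · exact (hDb _ (gsl_mem hcpt hDb hx)).2
  · have : {y | (x, y) ∈ D} = ∅ := by
      rw [Set.eq_empty_iff_forall_notMem]
      intro y hy
      exact hx ⟨(x, y), hy, rfl⟩
    rw [gsl, this, Real.sSup_empty]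
    simpa using hd
-- quasiconcavity
lemma gsl_quasi (hconv : Convex ℝ D) (hcpt : IsCompact D)
    (hDb : ∀ p ∈ D, |p.1| ≤ d ∧ |p.2| ≤ d)
    {w z m : ℝ} (hw : w ∈ Prod.fst '' D) (hm : m ∈ Prod.fst '' D)
    (hwz : w ≤ z) (hzm : z ≤ m) :
    min (gsl D w) (gsl D m) ≤ gsl D z := by
  obtain ⟨c1, c2, hc1, hc2, hsum, hcomb⟩ := (Convex.mem_Icc (le_trans hwz hzm)).mp ⟨hwz, hzm⟩
  have hp1 : (w, gsl D w) ∈ D := gsl_mem hcpt hDb hw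
  have hp2 : (m, gsl D m) ∈ D := gsl_mem hcpt hDb hm
  have hmem := hconv hp1 hp2 hc1 hc2 hsum
  have heq : c1 • (w, gsl D w) + c2 • (m, gsl D m) =
      ((z : ℝ), c1 * gsl D w + c2 * gsl D m) := by
    rw [Prod.smul_mk, Prod.smul_mk, Prod.mk_add_mk]
    rw [smul_eq_mul, smul_eq_mul, smul_eq_mul, smul_eq_mul, hcomb]
  rw [heq] at hmem
  have hle : c1 * gsl D w + c2 * gsl D m ≤ gsl D z := slice_mem_le hDb hmem
  have hmin : min (gsl D w) (gsl D m) ≤ c1 * gsl D w + c2 * gsl D m := by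
    rcases le_total (gsl D w) (gsl D m) with h | h
    · have h2 : c2 * gsl D w ≤ c2 * gsl D m := mul_le_mul_of_nonneg_left h hc2
      have h3 : c1 * gsl D w + c2 * gsl D w = gsl D w := by rw [← add_mul, hsum, one_mul]
      rw [min_eq_left h]
      linarith
    · have h2 : c1 * gsl D m ≤ c1 * gsl D w := mul_le_mul_of_nonneg_left h hc1
      have h3 : c1 * gsl D m + c2 * gsl D m = gsl D m := by rw [← add_mul, hsum, one_mul]
      rw [min_eq_right h]
      linarith
  linarith

lemma gsl_measurable (hconv : Convex ℝ D) (hcpt : IsCompact D)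
    (hDb : ∀ p ∈ D, |p.1| ≤ d ∧ |p.2| ≤ d) : Measurable (gsl D) := by
  apply measurable_of_Ioi
  intro c
  have hkey : gsl D ⁻¹' (Ioi c) =
      (Prod.fst '' (D ∩ {p | c < p.2})) ∪
        ((Prod.fst '' D)ᶜ ∩ (if c < 0 then univ else ∅)) := by
    ext x
    simp only [Set.mem_preimage, Set.mem_Ioi, Set.mem_union, Set.mem_inter_iff,
      Set.mem_compl_iff, Set.mem_image]
    by_cases hx : x ∈ Prod.fst '' D
    · obtain ⟨p, hp, hpx⟩ := hx
      have hne : {y | (x, y) ∈ D}.Nonempty := by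
        refine ⟨p.2, ?_⟩
        show (x, p.2) ∈ D
        rw [show ((x, p.2) : ℝ × ℝ) = p from Prod.ext hpx.symm rfl]
        exact hp
      have hbdd : BddAbove {y | (x, y) ∈ D} := slice_bddAbove hDb x
      constructor
      · intro hgt
        left
        obtain ⟨y, hy, hcy⟩ := (lt_csSup_iff hbdd hne).mp hgt
        exact ⟨(x, y), ⟨hy, hcy⟩, rfl⟩
      · rintro (⟨q, ⟨hq, hcq⟩, rfl⟩ | ⟨hnot, _⟩)
        · calc c < q.2 := hcq
          _ ≤ gsl D q.1 := le_csSup hbdd (by simpa using hq)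
        · exact absurd ⟨p, hp, hpx⟩ hnot
    · have hempty : {y | (x, y) ∈ D} = ∅ := by
        rw [Set.eq_empty_iff_forall_notMem]
        exact fun y hy => hx ⟨(x, y), hy, rfl⟩
      have hzero : gsl D x = 0 := by rw [gsl, hempty, Real.sSup_empty]
      rw [hzero]
      constructor
      · intro hc0
        right
        refine ⟨fun h => hx h, ?_⟩
        rw [if_pos hc0]; trivial
      · rintro (⟨q, ⟨hq, _⟩, rfl⟩ | ⟨_, hmem⟩)
        · exact absurd ⟨q, hq, rfl⟩ hx
        · by_cases h0 : c < 0
          · exact h0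
          · rw [if_neg h0] at hmem; exact absurd hmem (Set.notMem_empty _)
  rw [hkey]
  apply MeasurableSet.union
  · have : Convex ℝ (Prod.fst '' (D ∩ {p | c < p.2})) := by
      apply Convex.is_linear_image _ fst_linear
      exact hconv.inter (convex_halfSpace_gt ⟨fun _ _ => rfl, fun _ _ => rfl⟩ c)
    exact this.ordConnected.measurableSet
  · apply MeasurableSet.inter
    · exact ((hcpt.image continuous_fst).measurableSet).compl
    · split_ifs
      · exact MeasurableSet.univ
      · exact MeasurableSet.empty

end UPB

section UB
variable {D : Set (ℝ × ℝ)} {d r : ℝ}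

lemma intIntegrable_of_bdd {f : ℝ → ℝ} (hf : Measurable f) {C : ℝ} (hC : ∀ x, |f x| ≤ C)
    (u v : ℝ) : IntervalIntegrable f volume u v := by
  rw [intervalIntegrable_iff]
  apply Measure.integrableOn_of_bounded (measure_Ioc_lt_top).ne hf.aestronglyMeasurable
  filter_upwards with x
  rw [Real.norm_eq_abs]
  exact hC x

lemma upperBound (hconv : Convex ℝ D) (hcpt : IsCompact D) (hne : D.Nonempty)
    (hd : 0 ≤ d) (hr : 0 ≤ r) {η : ℝ} (hη : 0 < η)
    (hDb : ∀ p ∈ D, |p.1| ≤ d ∧ |p.2| ≤ d) :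
    ∃ G : ℝ → ℝ, Measurable G ∧ (∀ x, |G x| ≤ d) ∧
      (∀ x w, w ∈ Prod.fst '' D → |w - x| ≤ r → gsl D w ≤ G x + η) ∧
      ∫ x in (sInf (Prod.fst '' D) - r)..(sSup (Prod.fst '' D) + r), G x ≤
        (∫ x in (sInf (Prod.fst '' D))..(sSup (Prod.fst '' D)), gsl D x) + 2 * r * d := by
  set dom := Prod.fst '' D with hdom
  have hdomcpt : IsCompact dom := hcpt.image continuous_fst
  have hdomconv : Convex ℝ dom := hconv.is_linear_image fst_linear
  have hdomne : dom.Nonempty := hne.image _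
  set a := sInf dom with ha
  set b := sSup dom with hb
  have hdomIcc : dom = Icc a b := cvx_Icc dom hdomconv hdomcpt hdomne
  have hab : a ≤ b := by
    obtain ⟨x, hx⟩ := hdomne
    rw [hdomIcc] at hx
    exact le_trans hx.1 hx.2
  -- the near-maximizer
  set Mstar := sSup (gsl D '' dom) with hM
  have himgne : (gsl D '' dom).Nonempty := hdomne.image _
  have himgbdd : BddAbove (gsl D '' dom) := by
    refine ⟨d, ?_⟩
    rintro v ⟨x, hx, rfl⟩
    exact (abs_le.mp (gsl_abs_le hcpt hDb hd x)).2
  have hMle : ∀ w ∈ dom, gsl D w ≤ Mstar := fun w hw => le_csSup himgbdd ⟨w, hw, rfl⟩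
  have hMd : Mstar ≤ d := by
    apply csSup_le himgne
    rintro v ⟨x, hx, rfl⟩
    exact (abs_le.mp (gsl_abs_le hcpt hDb hd x)).2
  obtain ⟨v, ⟨m, hmdom, rfl⟩, hmv⟩ := exists_lt_of_lt_csSup himgne
    (show Mstar - η < Mstar from by linarith)
  have hma : a ≤ m := by rw [hdomIcc] at hmdom; exact hmdom.1
  have hmb : m ≤ b := by rw [hdomIcc] at hmdom; exact hmdom.2
  -- the majorant
  set G : ℝ → ℝ := fun x =>
    if x ≤ m - r then gsl D (x + r) else if x < m + r then Mstar else gsl D (x - r) with hG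
  have hmg := gsl_measurable hconv hcpt hDb
  have hGmeas : Measurable G := by
    apply Measurable.ite (measurableSet_le measurable_id measurable_const)
    · exact hmg.comp (measurable_add_const r)
    · apply Measurable.ite (measurableSet_lt measurable_id measurable_const)
      · exact measurable_const
      · exact hmg.comp (measurable_sub_const r)
  have hMabs : |Mstar| ≤ d := by
    rw [abs_le]
    refine ⟨?_, hMd⟩
    have := hMle a (by rw [hdomIcc]; exact ⟨le_refl a, hab⟩)
    have := (abs_le.mp (gsl_abs_le hcpt hDb hd a)).1
    linarith
  have hGabs : ∀ x, |G x| ≤ d := by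
    intro x
    rw [hG]
    dsimp only
    split_ifs
    · exact gsl_abs_le hcpt hDb hd _
    · exact hMabs
    · exact gsl_abs_le hcpt hDb hd _
  refine ⟨G, hGmeas, hGabs, ?_, ?_⟩
  · -- domination
    intro x w hw hwx
    have hwa : a ≤ w := by rw [hdomIcc] at hw; exact hw.1
    have hwb : w ≤ b := by rw [hdomIcc] at hw; exact hw.2
    have habs := abs_le.mp hwx
    rw [hG]
    dsimp only
    split_ifs with h1 h2
    · -- x + r ∈ [a, m], w ≤ x + r
      have hxr_dom : x + r ∈ dom := by
        rw [hdomIcc]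
        constructor
        · linarith
        · linarith
      have hwxr : w ≤ x + r := by linarith
      have hmin := gsl_quasi hconv hcpt hDb hw hmdom hwxr (by linarith)
      rcases min_le_iff.mp (le_refl (min (gsl D w) (gsl D m))) with h | h
      · rcases le_or_gt (gsl D w) (gsl D m) with hcase | hcase
        · rw [min_eq_left hcase] at hmin; linarith
        · rw [min_eq_right hcase.le] at hmin
          have := hMle w hw
          linarith
      · rcases le_or_gt (gsl D w) (gsl D m) with hcase | hcase
        · rw [min_eq_left hcase] at hmin; linarith
        · rw [min_eq_right hcase.le] at hmin
          have := hMle w hw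
          linarith
    · -- middle
      have := hMle w hw
      linarith
    · -- right side
      push_neg at h1 h2
      have hxr_dom : x - r ∈ dom := by
        rw [hdomIcc]
        constructor
        · linarith
        · linarith
      have hwxr : x - r ≤ w := by linarith
      have hmin := gsl_quasi hconv hcpt hDb hmdom hw (by linarith : m ≤ x - r) hwxr
      rcases le_or_gt (gsl D m) (gsl D w) with hcase | hcase
      · rw [min_eq_left hcase] at hmin
        have := hMle w hw
        linarith
      · rw [min_eq_right hcase.le] at hmin
        linarith
  · -- integral bound
    have hIg : ∀ u v : ℝ, IntervalIntegrable (gsl D) volume u v :=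
      intIntegrable_of_bdd hmg (gsl_abs_le hcpt hDb hd)
    have hIG : ∀ u v : ℝ, IntervalIntegrable G volume u v :=
      intIntegrable_of_bdd hGmeas hGabs
    have hI1 : ∫ x in (a-r)..(m-r), G x = ∫ x in a..m, gsl D x := by
      have heq : EqOn G (fun x => gsl D (x + r)) (uIcc (a-r) (m-r)) := by
        intro x hx
        rw [uIcc_of_le (by linarith)] at hx
        rw [hG]
        dsimp only
        rw [if_pos hx.2]
      rw [intervalIntegral.integral_congr heq,
        intervalIntegral.integral_comp_add_right (fun y => gsl D y) r]
      rw [show a - r + r = a by ring, show m - r + r = m by ring]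
    have hI2 : ∫ x in (m-r)..(m+r), G x = 2 * r * Mstar := by
      have hae : ∀ᵐ x : ℝ, x ∈ Set.uIoc (m-r) (m+r) → G x = Mstar := by
        have hne' : ∀ᵐ x : ℝ, x ≠ m + r := by
          rw [Filter.eventually_iff]
          rw [show {x : ℝ | x ≠ m + r} = {m + r}ᶜ from rfl]
          exact compl_mem_ae_iff.mpr (measure_singleton _)
        filter_upwards [hne'] with x hxne hxΙ
        rw [Set.mem_uIoc] at hxΙ
        rcases hxΙ with h | h
        · rw [hG]
          dsimp only
          rw [if_neg (by linarith [h.1]), if_pos (lt_of_le_of_ne h.2 hxne)]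
        · linarith [h.1, h.2]
      rw [intervalIntegral.integral_congr_ae hae, intervalIntegral.integral_const, smul_eq_mul]
      ring
    have hI3 : ∫ x in (m+r)..(b+r), G x = ∫ x in m..b, gsl D x := by
      have heq : EqOn G (fun x => gsl D (x - r)) (uIcc (m+r) (b+r)) := by
        intro x hx
        rw [uIcc_of_le (by linarith)] at hx
        rw [hG]
        dsimp only
        rcases le_or_gt x (m - r) with h1 | h1
        · rw [if_pos h1]
          have hr0 : r = 0 := by linarith [hx.1]
          have hxm : x = m := by linarith [hx.1]
          rw [hr0, hxm]
          norm_num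
        · rw [if_neg (by linarith), if_neg (by linarith [hx.1])]
      rw [intervalIntegral.integral_congr heq,
        intervalIntegral.integral_comp_sub_right (fun y => gsl D y) r]
      rw [show m + r - r = m by ring, show b + r - r = b by ring]
    have hadd1 := intervalIntegral.integral_add_adjacent_intervals
      (hIG (a-r) (m-r)) (hIG (m-r) (m+r))
    have hadd2 := intervalIntegral.integral_add_adjacent_intervals
      (hIG (a-r) (m+r)) (hIG (m+r) (b+r))
    have haddg := intervalIntegral.integral_add_adjacent_intervals (hIg a m) (hIg m b)
    have hrM : 2 * r * Mstar ≤ 2 * r * d := by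
      apply mul_le_mul_of_nonneg_left hMd
      linarith
    calc ∫ x in (a-r)..(b+r), G x
        = (∫ x in (a-r)..(m+r), G x) + ∫ x in (m+r)..(b+r), G x := hadd2.symm
      _ = ((∫ x in (a-r)..(m-r), G x) + ∫ x in (m-r)..(m+r), G x) + ∫ x in (m+r)..(b+r), G x := by
          rw [hadd1]
      _ = (∫ x in a..m, gsl D x) + 2 * r * Mstar + ∫ x in m..b, gsl D x := by
          rw [hI1, hI2, hI3]
      _ = (∫ x in a..b, gsl D x) + 2 * r * Mstar := by rw [← haddg]; ring
      _ ≤ (∫ x in a..b, gsl D x) + 2 * r * d := by linarith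

end UB


section VL

variable {D : Set (ℝ × ℝ)} {d r : ℝ}

def negsnd : ℝ × ℝ → ℝ × ℝ := fun p => (p.1, -p.2)

lemma negsnd_linear : IsLinearMap ℝ negsnd := by
  constructor
  · intro p q
    simp [negsnd, Prod.ext_iff]
    ring
  · intro c p
    simp [negsnd, Prod.ext_iff]

lemma slice_convex (hconv : Convex ℝ D) (x : ℝ) : Convex ℝ {y | (x, y) ∈ D} := by
  intro y1 h1 y2 h2 c1 c2 hc1 hc2 hsum
  have hmem := hconv h1 h2 hc1 hc2 hsum
  have heq : c1 • ((x, y1) : ℝ × ℝ) + c2 • (x, y2) = (x, c1 • y1 + c2 • y2) := by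
    rw [Prod.smul_mk, Prod.smul_mk, Prod.mk_add_mk]
    congr 1
    rw [smul_eq_mul, smul_eq_mul, ← add_mul, hsum, one_mul]
  rw [heq] at hmem
  exact hmem

set_option maxHeartbeats 2000000 in
lemma volLemma (S : Set (ℝ × ℝ)) (hconv : Convex ℝ D) (hcpt : IsCompact D) (hne : D.Nonempty)
    (hScpt : IsCompact S)
    (hd : 0 ≤ d) (hr : 0 ≤ r)
    (hDb : ∀ p ∈ D, |p.1| ≤ d ∧ |p.2| ≤ d)
    (hSD : ∀ p ∈ S, ∃ q ∈ D, (p.1 - q.1)^2 + (p.2 - q.2)^2 ≤ r^2) :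
    (volume S).toReal ≤ (volume D).toReal + 8 * d * r + π * r^2 := by
  -- reflected body
  set D' : Set (ℝ × ℝ) := negsnd '' D with hD'
  have hconv' : Convex ℝ D' := hconv.is_linear_image negsnd_linear
  have hcpt' : IsCompact D' := hcpt.image (continuous_fst.prodMk continuous_snd.neg)
  have hne' : D'.Nonempty := hne.image _
  have hDb' : ∀ p ∈ D', |p.1| ≤ d ∧ |p.2| ≤ d := by
    rintro p ⟨q, hq, rfl⟩
    refine ⟨(hDb q hq).1, ?_⟩
    rw [show (negsnd q).2 = -q.2 from rfl, abs_neg]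
    exact (hDb q hq).2
  have hdom' : Prod.fst '' D' = Prod.fst '' D := by
    rw [hD', Set.image_image]
    rfl
  -- the projection interval
  set dom := Prod.fst '' D with hdomdef
  have hdomcpt : IsCompact dom := hcpt.image continuous_fst
  have hdomconv : Convex ℝ dom := hconv.is_linear_image fst_linear
  have hdomne : dom.Nonempty := hne.image _
  set a := sInf dom with ha
  set b := sSup dom with hb
  have hdomIcc : dom = Icc a b := cvx_Icc dom hdomconv hdomcpt hdomne
  have hane : a ∈ dom := hdomcpt.sInf_mem hdomne
  have hbne : b ∈ dom := hdomcpt.sSup_mem hdomne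
  have hab : a ≤ b := by
    rw [hdomIcc] at hane; exact le_trans hane.1 hane.2
  have hane' : a ∈ dom := hdomcpt.sInf_mem hdomne
  have had : -d ≤ a := by
    obtain ⟨p, hp, hpa⟩ := hane'
    have h := (abs_le.mp (hDb p hp).1).1
    linarith [hpa ▸ h]
  have hbd : b ≤ d := by
    obtain ⟨p, hp, hpb⟩ := hbne
    have h := (abs_le.mp (hDb p hp).1).2
    linarith [hpb ▸ h]
  have hba2d : b - a ≤ 2 * d := by linarith
  -- basic slice facts
  have hD'slice : ∀ q ∈ D, -(q.2) ≤ gsl D' q.1 := by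
    intro q hq
    apply slice_mem_le hDb'
    exact ⟨q, hq, rfl⟩
  have hsum_nonneg : ∀ x ∈ dom, 0 ≤ gsl D x + gsl D' x := by
    intro x hx
    have h1 : (x, gsl D x) ∈ D := gsl_mem hcpt hDb hx
    have h2 := hD'slice _ h1
    dsimp only at h2
    linarith
  -- slice volume identity for D
  have hsliceD : ∀ x ∈ dom, volume {y | (x, y) ∈ D} = ENNReal.ofReal (gsl D x + gsl D' x) := by
    intro x hx
    set sl := {y | (x, y) ∈ D} with hsl
    have hslne : sl.Nonempty := by
      obtain ⟨p, hp, hpx⟩ := hx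
      refine ⟨p.2, ?_⟩
      show (x, p.2) ∈ D
      rw [show ((x, p.2) : ℝ × ℝ) = p from Prod.ext hpx.symm rfl]
      exact hp
    have hslcl : IsClosed sl := hcpt.isClosed.preimage (Continuous.prodMk_right x)
    have hslsub : sl ⊆ Icc (-d) d := by
      intro y hy
      have := abs_le.mp (hDb _ hy).2
      exact ⟨this.1, this.2⟩
    have hslcpt : IsCompact sl := isCompact_Icc.of_isClosed_subset hslcl hslsub
    have hslIcc : sl = Icc (sInf sl) (sSup sl) :=
      cvx_Icc sl (slice_convex hconv x) hslcpt hslne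
    have hsSup : sSup sl = gsl D x := rfl
    have hnegslice : {y | (x, y) ∈ D'} = -sl := by
      ext y
      simp only [Set.mem_neg, hsl, Set.mem_setOf_eq]
      constructor
      · rintro ⟨q, hq, hqe⟩
        have h1 : q.1 = x := congrArg Prod.fst hqe
        have h2 : -q.2 = y := congrArg Prod.snd hqe
        show (x, -y) ∈ D
        rw [show ((x, -y) : ℝ × ℝ) = q from Prod.ext h1.symm (by rw [← h2, neg_neg])]
        exact hq
      · intro h
        exact ⟨(x, -y), h, by simp [negsnd]⟩
    have hsInf : gsl D' x = -sInf sl := by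
      rw [gsl, hnegslice]
      rw [Real.sInf_def]
      ring
    calc volume sl = volume (Icc (sInf sl) (sSup sl)) := by rw [← hslIcc]
    _ = ENNReal.ofReal (sSup sl - sInf sl) := Real.volume_Icc
    _ = ENNReal.ofReal (gsl D x + gsl D' x) := by rw [hsSup, hsInf]; ring_nf
  -- main estimate
  refine le_of_forall_pos_le_add ?_
  intro eps heps
  set η := eps / (4 * (d + r) + 1) with hηdef
  have hη : 0 < η := div_pos heps (by positivity)
  have hηbound : η * (4 * (d + r)) ≤ eps := by
    rw [hηdef, div_mul_eq_mul_div, div_le_iff₀ (by positivity)]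
    nlinarith [heps.le]
  obtain ⟨G₁, hG₁m, hG₁abs, hG₁dom, hG₁int⟩ := upperBound hconv hcpt hne hd hr hη hDb
  obtain ⟨G₂, hG₂m, hG₂abs, hG₂dom, hG₂int⟩ := upperBound hconv' hcpt' hne' hd hr hη hDb'
  rw [hdom'] at hG₂dom hG₂int
  rw [← ha, ← hb] at hG₁int hG₂int
  -- pointwise containment of slices of S
  have hsub : ∀ p : ℝ × ℝ, p ∈ S → p.1 ∈ Icc (a - r) (b + r) ∧
      -(G₂ p.1 + η + capf a b r p.1) ≤ p.2 ∧ p.2 ≤ G₁ p.1 + η + capf a b r p.1 := by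
    intro p hp
    obtain ⟨q, hq, hpq⟩ := hSD p hp
    have hq1 : q.1 ∈ dom := ⟨q, hq, rfl⟩
    have hq1' : q.1 ∈ Icc a b := by rw [← hdomIcc]; exact hq1
    have hdx2 : (p.1 - q.1)^2 ≤ r^2 := by nlinarith [sq_nonneg (p.2 - q.2)]
    have hdy2 : (p.2 - q.2)^2 ≤ r^2 - (p.1 - q.1)^2 := by nlinarith [sq_nonneg (p.1 - q.1)]
    have hdx : |q.1 - p.1| ≤ r := by
      rw [abs_le]
      constructor <;> nlinarith
    have habs := abs_le.mp hdx
    have hx_mem : p.1 ∈ Icc (a - r) (b + r) :=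
      ⟨by linarith [hq1'.1], by linarith [hq1'.2]⟩
    have hsq : ∀ z : ℝ, z^2 ≤ r^2 - (p.1 - q.1)^2 → z ≤ capf a b r p.1 := by
      intro z hz
      calc z ≤ |z| := le_abs_self z
      _ = Real.sqrt (z^2) := (Real.sqrt_sq_eq_abs z).symm
      _ ≤ Real.sqrt (r^2 - (p.1 - q.1)^2) := Real.sqrt_le_sqrt hz
      _ ≤ capf a b r p.1 := capf_ge a b r p.1 q.1 hr hq1' hdx2
    refine ⟨hx_mem, ?_, ?_⟩
    · have h1 : -q.2 ≤ gsl D' q.1 := hD'slice q hq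
      have h2 : gsl D' q.1 ≤ G₂ p.1 + η := hG₂dom p.1 q.1 hq1 hdx
      have h3 : -(p.2 - q.2) ≤ capf a b r p.1 := hsq _ (by nlinarith)
      linarith
    · have h1 : q.2 ≤ gsl D q.1 :=
        slice_mem_le hDb (show (q.1, q.2) ∈ D by rw [Prod.mk.eta]; exact hq)
      have h2 : gsl D q.1 ≤ G₁ p.1 + η := hG₁dom p.1 q.1 hq1 hdx
      have h3 : p.2 - q.2 ≤ capf a b r p.1 := hsq _ hdy2
      linarith
  -- the width function
  set Tfun : ℝ → ℝ := fun x => G₁ x + G₂ x + 2 * η + 2 * capf a b r x with hTfun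
  have hTmeas : Measurable Tfun := by
    apply Measurable.add
    · apply Measurable.add
      · exact hG₁m.add hG₂m
      · exact measurable_const
    · exact (capf_measurable a b r).const_mul 2
  have hcapabs : ∀ x, |capf a b r x| ≤ r := by
    intro x
    rw [abs_le]
    exact ⟨by linarith [capf_nonneg a b r hr x], capf_le a b r hr x⟩
  have hTabs : ∀ x, |Tfun x| ≤ 2*d + 2*η + 2*r := by
    intro x
    rw [hTfun]
    dsimp only
    have h1 := abs_le.mp (hG₁abs x)
    have h2 := abs_le.mp (hG₂abs x)
    have h3 := abs_le.mp (hcapabs x)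
    rw [abs_le]
    constructor <;> [nlinarith; nlinarith]
  -- nonnegativity of Tfun on the window
  have hTB : ∀ x ∈ Icc (a - r) (b + r), 0 ≤ Tfun x := by
    intro x hx
    set w := max a (min x b) with hw
    have hwIcc : w ∈ Icc a b := ⟨le_max_left _ _, max_le hab (min_le_right _ _)⟩
    have hwx : |w - x| ≤ r := by
      rcases le_total x a with h1 | h1
      · have hwa : w = a := by
          rw [hw, min_eq_left (le_trans h1 hab), max_eq_left h1]
        rw [hwa, abs_le]
        exact ⟨by linarith, by linarith [hx.1]⟩
      · rcases le_total x b with h2 | h2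
        · have hwx' : w = x := by rw [hw, min_eq_left h2, max_eq_right h1]
          rw [hwx', sub_self, abs_zero]; exact hr
        · have hwb : w = b := by rw [hw, min_eq_right h2, max_eq_right hab]
          rw [hwb, abs_le]
          exact ⟨by linarith [hx.2], by linarith⟩
    have hwdom : w ∈ dom := by rw [hdomIcc]; exact hwIcc
    have h1 : gsl D w ≤ G₁ x + η := hG₁dom x w hwdom hwx
    have h2 : gsl D' w ≤ G₂ x + η := hG₂dom x w hwdom hwx
    have h3 : 0 ≤ gsl D w + gsl D' w := hsum_nonneg w hwdom
    have h4 : 0 ≤ capf a b r x := capf_nonneg a b r hr x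
    rw [hTfun]
    dsimp only
    linarith
  -- upper bound for volume of S
  have hSmeas : MeasurableSet S := hScpt.measurableSet
  have hDmeas : MeasurableSet D := hcpt.measurableSet
  have hslice_up : ∀ x : ℝ, volume {y | (x, y) ∈ S} ≤
      (Icc (a-r) (b+r)).indicator (fun x => ENNReal.ofReal (Tfun x)) x := by
    intro x
    by_cases hx : x ∈ Icc (a-r) (b+r)
    · rw [Set.indicator_of_mem hx]
      have hsubset : {y | (x, y) ∈ S} ⊆
          Icc (-(G₂ x + η + capf a b r x)) (G₁ x + η + capf a b r x) := by
        intro y hy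
        exact ⟨(hsub (x, y) hy).2.1, (hsub (x, y) hy).2.2⟩
      calc volume {y | (x, y) ∈ S} ≤ volume (Icc (-(G₂ x + η + capf a b r x))
          (G₁ x + η + capf a b r x)) := measure_mono hsubset
      _ = ENNReal.ofReal (Tfun x) := by
          rw [Real.volume_Icc]
          congr 1
          rw [hTfun]
          ring
    · rw [Set.indicator_of_notMem hx]
      have hempty : {y | (x, y) ∈ S} = ∅ := by
        rw [Set.eq_empty_iff_forall_notMem]
        intro y hy
        exact hx (hsub (x, y) hy).1
      rw [hempty]
      simp
  have hvolS : volume S ≤ ∫⁻ x in Icc (a-r) (b+r), ENNReal.ofReal (Tfun x) := by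
    rw [← lintegral_indicator measurableSet_Icc]
    calc volume S = ∫⁻ x, volume {y | (x, y) ∈ S} := by
          rw [Measure.volume_eq_prod, Measure.prod_apply hSmeas]
          rfl
    _ ≤ _ := lintegral_mono hslice_up
  have hTi : IntegrableOn Tfun (Icc (a-r) (b+r)) volume := by
    apply Measure.integrableOn_of_bounded measure_Icc_lt_top.ne hTmeas.aestronglyMeasurable
    filter_upwards with x
    rw [Real.norm_eq_abs]
    exact hTabs x
  have hTnn : 0 ≤ᵐ[volume.restrict (Icc (a-r) (b+r))] Tfun := by
    apply (MeasureTheory.ae_restrict_iff' measurableSet_Icc).mpr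
    filter_upwards with x hx
    exact hTB x hx
  have hup2 : (∫⁻ x in Icc (a-r) (b+r), ENNReal.ofReal (Tfun x)) =
      ENNReal.ofReal (∫ x in Icc (a-r) (b+r), Tfun x) :=
    (MeasureTheory.ofReal_integral_eq_lintegral_ofReal hTi hTnn).symm
  -- evaluating the real integral
  have hIcc2int : ∫ x in Icc (a-r) (b+r), Tfun x = ∫ x in (a-r)..(b+r), Tfun x := by
    rw [MeasureTheory.integral_Icc_eq_integral_Ioc,
      intervalIntegral.integral_of_le (by linarith : a - r ≤ b + r)]
  have i1 : IntervalIntegrable G₁ volume (a-r) (b+r) := intIntegrable_of_bdd hG₁m hG₁abs _ _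
  have i2 : IntervalIntegrable G₂ volume (a-r) (b+r) := intIntegrable_of_bdd hG₂m hG₂abs _ _
  have icap : IntervalIntegrable (capf a b r) volume (a-r) (b+r) :=
    intIntegrable_of_bdd (capf_measurable a b r) hcapabs _ _
  have hsplit : ∫ x in (a-r)..(b+r), Tfun x =
      (∫ x in (a-r)..(b+r), G₁ x) + (∫ x in (a-r)..(b+r), G₂ x)
      + (2 * η) * ((b+r) - (a-r)) + 2 * ∫ x in (a-r)..(b+r), capf a b r x := by
    rw [hTfun]
    have e1 : (∫ x in (a-r)..(b+r), (G₁ x + G₂ x + 2 * η + 2 * capf a b r x)) =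
        (∫ x in (a-r)..(b+r), (G₁ x + G₂ x + 2 * η)) +
          ∫ x in (a-r)..(b+r), 2 * capf a b r x := by
      apply intervalIntegral.integral_add _ (icap.const_mul 2)
      exact (i1.add i2).add (intervalIntegrable_const)
    have e2 : (∫ x in (a-r)..(b+r), (G₁ x + G₂ x + 2 * η)) =
        (∫ x in (a-r)..(b+r), (G₁ x + G₂ x)) + ∫ x in (a-r)..(b+r), (2*η : ℝ) := by
      apply intervalIntegral.integral_add (i1.add i2) intervalIntegrable_const
    have e3 : (∫ x in (a-r)..(b+r), (G₁ x + G₂ x)) =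
        (∫ x in (a-r)..(b+r), G₁ x) + ∫ x in (a-r)..(b+r), G₂ x :=
      intervalIntegral.integral_add i1 i2
    rw [e1, e2, e3, intervalIntegral.integral_const, intervalIntegral.integral_const_mul,
      smul_eq_mul]
    ring
  -- gsl integrals
  have hgm₁ := gsl_measurable hconv hcpt hDb
  have hgm₂ := gsl_measurable hconv' hcpt' hDb'
  have ig1 : ∀ u v : ℝ, IntervalIntegrable (gsl D) volume u v :=
    intIntegrable_of_bdd hgm₁ (gsl_abs_le hcpt hDb hd)
  have ig2 : ∀ u v : ℝ, IntervalIntegrable (gsl D') volume u v :=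
    intIntegrable_of_bdd hgm₂ (gsl_abs_le hcpt' hDb' hd)
  have hgsum : (∫ x in a..b, (gsl D x + gsl D' x)) =
      (∫ x in a..b, gsl D x) + ∫ x in a..b, gsl D' x :=
    intervalIntegral.integral_add (ig1 a b) (ig2 a b)
  have hIT : ∫ x in (a-r)..(b+r), Tfun x ≤
      (∫ x in a..b, (gsl D x + gsl D' x)) + (8*d*r + π*r^2 + eps) := by
    rw [hsplit, hgsum]
    have hc := capf_integral a b r hab hr
    rw [hc]
    have hb1 : (2 * η) * ((b+r) - (a-r)) ≤ eps := by
      have : (b+r) - (a-r) = (b - a) + 2*r := by ring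
      rw [this]
      calc (2 * η) * ((b - a) + 2*r) ≤ (2 * η) * (2*d + 2*r) := by
            apply mul_le_mul_of_nonneg_left _ (by linarith)
            linarith
      _ = η * (4 * (d + r)) := by ring
      _ ≤ eps := hηbound
    have hb2 : 2 * (r * (b - a) + π * r^2/2) ≤ 4*d*r + π*r^2 := by
      have : r * (b - a) ≤ r * (2*d) := mul_le_mul_of_nonneg_left hba2d hr
      nlinarith
    linarith [hG₁int, hG₂int]
  -- lower bound for volume of D
  have hlow : ENNReal.ofReal (∫ x in a..b, (gsl D x + gsl D' x)) ≤ volume D := by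
    have hmicc : (∫ x in a..b, (gsl D x + gsl D' x)) =
        ∫ x in Icc a b, (gsl D x + gsl D' x) := by
      rw [MeasureTheory.integral_Icc_eq_integral_Ioc,
        intervalIntegral.integral_of_le hab]
    have hgi : IntegrableOn (fun x => gsl D x + gsl D' x) (Icc a b) volume := by
      apply Measure.integrableOn_of_bounded measure_Icc_lt_top.ne
        ((hgm₁.add hgm₂).aestronglyMeasurable)
      filter_upwards with x
      rw [Real.norm_eq_abs]
      calc |gsl D x + gsl D' x| ≤ |gsl D x| + |gsl D' x| := abs_add_le _ _
      _ ≤ d + d := add_le_add (gsl_abs_le hcpt hDb hd x) (gsl_abs_le hcpt' hDb' hd x)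
      _ = 2 * d := by ring
    have hgnn : 0 ≤ᵐ[volume.restrict (Icc a b)] fun x => gsl D x + gsl D' x := by
      apply (MeasureTheory.ae_restrict_iff' measurableSet_Icc).mpr
      filter_upwards with x hx
      exact hsum_nonneg x (by rw [hdomIcc]; exact hx)
    rw [hmicc, MeasureTheory.ofReal_integral_eq_lintegral_ofReal hgi hgnn]
    calc (∫⁻ x in Icc a b, ENNReal.ofReal (gsl D x + gsl D' x))
        = ∫⁻ x, (Icc a b).indicator (fun x => ENNReal.ofReal (gsl D x + gsl D' x)) x := by
          rw [lintegral_indicator measurableSet_Icc]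
    _ ≤ ∫⁻ x, volume {y | (x, y) ∈ D} := by
          apply lintegral_mono
          intro x
          dsimp only
          by_cases hx : x ∈ Icc a b
          · rw [Set.indicator_of_mem hx, hsliceD x (by rw [hdomIcc]; exact hx)]
          · rw [Set.indicator_of_notMem hx]
            exact zero_le
    _ = volume D := by
          rw [Measure.volume_eq_prod, Measure.prod_apply hDmeas]
          rfl
  -- combine
  have hfin : volume S ≤ volume D + ENNReal.ofReal (8*d*r + π*r^2 + eps) := by
    calc volume S ≤ ENNReal.ofReal (∫ x in Icc (a-r) (b+r), Tfun x) := hvolS.trans hup2.le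
    _ ≤ ENNReal.ofReal ((∫ x in a..b, (gsl D x + gsl D' x)) + (8*d*r + π*r^2 + eps)) := by
        apply ENNReal.ofReal_le_ofReal
        rw [hIcc2int]
        exact hIT
    _ ≤ ENNReal.ofReal (∫ x in a..b, (gsl D x + gsl D' x)) +
          ENNReal.ofReal (8*d*r + π*r^2 + eps) := ENNReal.ofReal_add_le
    _ ≤ volume D + ENNReal.ofReal (8*d*r + π*r^2 + eps) := add_le_add_left hlow _
  have hDfin : volume D ≠ ⊤ := hcpt.measure_lt_top.ne
  have hmono := ENNReal.toReal_mono (by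
    apply ENNReal.add_ne_top.mpr
    exact ⟨hDfin, ENNReal.ofReal_ne_top⟩) hfin
  rw [ENNReal.toReal_add hDfin ENNReal.ofReal_ne_top,
    ENNReal.toReal_ofReal (by positivity)] at hmono
  linarith

end VL


section assembly

/-- the canonical measurable equivalence `E2 ≃ᵐ ℝ × ℝ` -/
def E2equiv : E2 ≃ᵐ ℝ × ℝ :=
  (MeasurableEquiv.toLp 2 (Fin 2 → ℝ)).symm.trans (MeasurableEquiv.finTwoArrow)

lemma E2equiv_apply (x : E2) : E2equiv x = (x 0, x 1) := rfl

lemma E2equiv_mp : MeasurePreserving E2equiv (volume : Measure E2) volume :=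
  (volume_preserving_finTwoArrow ℝ).comp (EuclideanSpace.volume_preserving_symm_measurableEquiv_toLp (Fin 2))

lemma vol_image (T : Set E2) (hT : MeasurableSet T) : volume (E2equiv '' T) = volume T := by
  rw [MeasurableEquiv.image_eq_preimage_symm]
  exact (E2equiv_mp.symm E2equiv).measure_preimage hT.nullMeasurableSet

lemma E2equiv_convex {T : Set E2} (hT : Convex ℝ T) : Convex ℝ (E2equiv '' T) := by
  have hlin : IsLinearMap ℝ (fun x : E2 => ((x 0, x 1) : ℝ × ℝ)) :=
    ⟨fun _ _ => rfl, fun _ _ => rfl⟩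
  have : E2equiv '' T = (fun x : E2 => ((x 0, x 1) : ℝ × ℝ)) '' T :=
    Set.image_congr' (fun x => rfl)
  rw [this]
  exact hT.is_linear_image hlin

lemma E2equiv_compact {T : Set E2} (hT : IsCompact T) : IsCompact (E2equiv '' T) := by
  have : E2equiv '' T = (fun x : E2 => ((x 0, x 1) : ℝ × ℝ)) '' T :=
    Set.image_congr' (fun x => rfl)
  rw [this]
  apply hT.image
  have h0 : Continuous (fun x : E2 => x 0) := by
    exact (continuous_apply (0 : Fin 2)).comp (PiLp.continuous_ofLp 2 (fun _ : Fin 2 => ℝ))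
  have h1 : Continuous (fun x : E2 => x 1) := by
    exact (continuous_apply (1 : Fin 2)).comp (PiLp.continuous_ofLp 2 (fun _ : Fin 2 => ℝ))
  exact h0.prodMk h1

/-- The difference body. -/
def DE (θ : ℝ) (M : Set E2) : Set E2 := {p | ∃ x ∈ M, ∃ y ∈ M, p = x - rot θ y}

lemma Ex_eq (θ : ℝ) (M : Set E2) : Ex θ M = (volume (DE θ M)).toReal := rfl

lemma DE_eq (θ : ℝ) (M : Set E2) :
    DE θ M = (fun pq : E2 × E2 => pq.1 - rot θ pq.2) '' (M ×ˢ M) := by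
  ext p
  constructor
  · rintro ⟨x, hx, y, hy, rfl⟩
    exact ⟨(x, y), ⟨hx, hy⟩, rfl⟩
  · rintro ⟨⟨x, y⟩, ⟨hx, hy⟩, rfl⟩
    exact ⟨x, hx, y, hy, rfl⟩

lemma DE_compact (θ : ℝ) (hM : IsCompact M) : IsCompact (DE θ M) := by
  rw [DE_eq]
  exact (hM.prod hM).image (continuous_fst.sub ((continuous_rot θ).comp continuous_snd))

lemma DE_convex (θ : ℝ) (hM : Convex ℝ M) : Convex ℝ (DE θ M) := by
  rw [DE_eq]
  apply Convex.is_linear_image (hM.prod hM)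
  constructor
  · intro p q
    show (p.1 + q.1) - rot θ (p.2 + q.2) = _
    rw [rotL_eq, map_add]
    abel
  · intro c p
    show (c • p.1) - rot θ (c • p.2) = c • (p.1 - rot θ p.2)
    rw [rotL_eq, LinearMap.map_smul, smul_sub]

lemma DE_norm_le (θ : ℝ) (hcpt : IsCompact M) (hsymm : M = -M) {p : E2} (hp : p ∈ DE θ M) :
    ‖p‖ ≤ Metric.diam M := by
  obtain ⟨x, hx, y, hy, rfl⟩ := hp
  calc ‖x - rot θ y‖ ≤ ‖x‖ + ‖rot θ y‖ := norm_sub_le _ _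
  _ = ‖x‖ + ‖y‖ := by rw [norm_rot]
  _ ≤ Metric.diam M / 2 + Metric.diam M / 2 :=
      add_le_add (norm_le_half_diam hcpt hsymm hx) (norm_le_half_diam hcpt hsymm hy)
  _ = Metric.diam M := by ring

theorem stmt18 (M : Set E2) (hne : M.Nonempty) (hcpt : IsCompact M) (hconv : Convex ℝ M)
    (hsymm : M = -M) :
    (∀ k : ℕ, 1 ≤ k → ∀ θ : ℝ,
      |Ex θ M - Ex θ (canonApprox M (2 * k))| ≤
        16 * Metric.diam M * (π * (1 + Real.sqrt 2) * Metric.diam M / (4 * k)) +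
          4 * π * (π * (1 + Real.sqrt 2) * Metric.diam M / (4 * k)) ^ 2) ∧
    ∃ C : ℝ, ∀ k : ℕ, 1 ≤ k → ∀ θ : ℝ,
      |Ex θ M - Ex θ (canonApprox M (2 * k))| ≤ C / k := by
  have hd0 : 0 ≤ Metric.diam M := Metric.diam_nonneg
  set d := Metric.diam M with hd
  have hpart1 : ∀ k : ℕ, 1 ≤ k → ∀ θ : ℝ,
      |Ex θ M - Ex θ (canonApprox M (2 * k))| ≤
        16 * d * (π * (1 + Real.sqrt 2) * d / (4 * k)) +
          4 * π * (π * (1 + Real.sqrt 2) * d / (4 * k)) ^ 2 := by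
    intro k hk θ
    have hk1 : (1:ℝ) ≤ (k:ℝ) := by exact_mod_cast hk
    set ε := π * (1 + Real.sqrt 2) * d / (4 * k) with hε
    have hsqrt2 : 0 ≤ Real.sqrt 2 := Real.sqrt_nonneg 2
    have hε0 : 0 ≤ ε := by
      rw [hε]
      apply div_nonneg _ (by linarith)
      exact mul_nonneg (mul_nonneg Real.pi_pos.le (by linarith)) hd0
    set Mk := canonApprox M (2 * k) with hMk
    -- properties of Mk
    have hMksub : M ⊆ Mk := subset_canonApprox hcpt (2 * k)
    have hMkne : Mk.Nonempty := hne.mono hMksub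
    have hMkconv : Convex ℝ Mk := by
      rw [hMk, canonApprox]
      apply convex_iInter
      intro i
      apply convex_iInter
      intro _
      exact convex_halfSpace_le
        ⟨fun x y => inner_add_left x y _, fun c x => real_inner_smul_left x _ c⟩ _
    have hMkclosed : IsClosed Mk := by
      rw [hMk, canonApprox]
      apply isClosed_biInter
      intro i _
      exact isClosed_le (Continuous.inner continuous_id continuous_const) continuous_const
    have hMknear : ∀ x ∈ Mk, ∃ m ∈ M, dist x m ≤ ε :=
      fun x hx => canon_near hne hcpt hconv hsymm hk hx
    have hMkbdd : Bornology.IsBounded Mk := by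
      apply (Metric.isBounded_closedBall (x := (0:E2)) (r := ε + d/2)).subset
      intro x hx
      obtain ⟨m, hm, hdist⟩ := hMknear x hx
      rw [Metric.mem_closedBall]
      calc dist x 0 ≤ dist x m + dist m 0 := dist_triangle _ _ _
      _ ≤ ε + d/2 := by
          apply add_le_add hdist
          rw [dist_zero_right]
          exact norm_le_half_diam hcpt hsymm hm
    have hMkcpt : IsCompact Mk := Metric.isCompact_of_isClosed_isBounded hMkclosed hMkbdd
    set r : ℝ := 2 * ε with hr
    have hr0 : 0 ≤ r := by rw [hr]; linarith
    have hDsub : DE θ M ⊆ DE θ Mk := by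
      rintro p ⟨x, hx, y, hy, rfl⟩
      exact ⟨x, hMksub hx, y, hMksub hy, rfl⟩
    have hDEne : (DE θ M).Nonempty := by
      obtain ⟨x0, hx0⟩ := hne
      exact ⟨x0 - rot θ x0, x0, hx0, x0, hx0, rfl⟩
    have hSfin : volume (DE θ Mk) ≠ ⊤ := (DE_compact θ hMkcpt).measure_lt_top.ne
    have hExle : Ex θ M ≤ Ex θ Mk := by
      rw [Ex_eq, Ex_eq]
      exact ENNReal.toReal_mono hSfin (measure_mono hDsub)
    rw [show |Ex θ M - Ex θ Mk| = Ex θ Mk - Ex θ M from by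
      rw [abs_sub_comm, abs_of_nonneg (by linarith)]]
    -- hypotheses of volLemma
    have hDb : ∀ p ∈ E2equiv '' (DE θ M), |p.1| ≤ d ∧ |p.2| ≤ d := by
      rintro p ⟨q, hq, rfl⟩
      rw [E2equiv_apply]
      have hn := DE_norm_le θ hcpt hsymm hq
      exact ⟨le_trans (abs_coord_le_norm q 0) hn, le_trans (abs_coord_le_norm q 1) hn⟩
    have hSD : ∀ p ∈ E2equiv '' (DE θ Mk), ∃ q ∈ E2equiv '' (DE θ M),
        (p.1 - q.1)^2 + (p.2 - q.2)^2 ≤ r^2 := by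
      rintro pp ⟨s, hs, rfl⟩
      obtain ⟨x, hx, y, hy, rfl⟩ := hs
      obtain ⟨x', hx', hxd⟩ := hMknear x hx
      obtain ⟨y', hy', hyd⟩ := hMknear y hy
      set q : E2 := x' - rot θ y' with hq
      have hqD : q ∈ DE θ M := ⟨x', hx', y', hy', rfl⟩
      refine ⟨E2equiv q, ⟨q, hqD, rfl⟩, ?_⟩
      rw [E2equiv_apply, E2equiv_apply]
      set p : E2 := x - rot θ y with hp
      have hdist : dist p q ≤ r := by
        have he : p - q = (x - x') - rot θ (y - y') := by
          rw [hp, hq, rotL_eq, map_sub]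
          abel
        rw [dist_eq_norm, he]
        calc ‖(x - x') - rot θ (y - y')‖ ≤ ‖x - x'‖ + ‖rot θ (y - y')‖ := norm_sub_le _ _
        _ = ‖x - x'‖ + ‖y - y'‖ := by rw [norm_rot]
        _ ≤ ε + ε := add_le_add (by rw [← dist_eq_norm]; exact hxd)
            (by rw [← dist_eq_norm]; exact hyd)
        _ = r := by rw [hr]; ring
      have hsq : (p 0 - q 0)^2 + (p 1 - q 1)^2 = dist p q ^ 2 := by
        rw [EuclideanSpace.dist_eq]
        rw [Real.sq_sqrt (by positivity)]
        simp [Fin.sum_univ_two, Real.dist_eq, sq_abs]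
      show (p 0 - q 0)^2 + (p 1 - q 1)^2 ≤ r^2
      rw [hsq]
      exact pow_le_pow_left₀ dist_nonneg hdist 2
    have key := volLemma (E2equiv '' DE θ Mk) (E2equiv_convex (DE_convex θ hconv))
      (E2equiv_compact (DE_compact θ hcpt)) (hDEne.image _)
      (E2equiv_compact (DE_compact θ hMkcpt)) hd0 hr0 hDb hSD
    rw [vol_image _ (DE_compact θ hMkcpt).measurableSet,
      vol_image _ (DE_compact θ hcpt).measurableSet] at key
    rw [Ex_eq, Ex_eq]
    have harith : 8 * d * r + π * r^2 = 16*d*ε + 4*π*ε^2 := by rw [hr]; ring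
    linarith [key]
  refine ⟨hpart1, ?_⟩
  set c := π * (1 + Real.sqrt 2) * d / 4 with hc
  have hsqrt2 : 0 ≤ Real.sqrt 2 := Real.sqrt_nonneg 2
  have hc0 : 0 ≤ c := by
    rw [hc]
    apply div_nonneg _ (by norm_num)
    exact mul_nonneg (mul_nonneg Real.pi_pos.le (by linarith)) hd0
  refine ⟨16 * d * c + 4 * π * c ^ 2, ?_⟩
  intro k hk θ
  have hk1 : (1:ℝ) ≤ (k:ℝ) := by exact_mod_cast hk
  have hkpos : (0:ℝ) < k := by linarith
  have hεeq : π * (1 + Real.sqrt 2) * d / (4 * k) = c / k := by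
    rw [hc]
    field_simp
  have h1 := hpart1 k hk θ
  rw [hεeq, div_pow] at h1
  refine h1.trans ?_
  have hk2 : (k:ℝ) ≤ (k:ℝ)^2 := by nlinarith
  have h2 : c^2 / (k:ℝ)^2 ≤ c^2 / k :=
    div_le_div_of_nonneg_left (sq_nonneg c) hkpos hk2
  have h3 : 16*d*(c/k) + 4*π*(c^2/k) = (16*d*c + 4*π*c^2)/k := by
    field_simp
  have hπ := Real.pi_pos
  calc 16*d*(c/k) + 4*π*(c^2/(k:ℝ)^2) ≤ 16*d*(c/k) + 4*π*(c^2/k) := by nlinarith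
  _ = (16*d*c + 4*π*c^2)/k := h3

end assembly
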